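/- Let n ≥ 1. The function W defined on the real vector space of Hermitian complex n×n matrices by W(f) = −log Re trace(exp(−f)) is concave: for all Hermitian f, g and all t ∈ [0,1], W(t·f + (1−t)·g) ≥ t·W(f) + (1−t)·W(g). -/

import Mathlib

open Matrix

noncomputable def genFunctional {n : ℕ} (f : Matrix (Fin n) (Fin n) ℂ) : ℝ :=
  -Real.log ((Matrix.trace (NormedSpace.exp (-f))).re)

section Aux
variable {n : ℕ}

/-- exp of a Hermitian matrix via its spectral decomposition. -/
lemma exp_hermitian {A : Matrix (Fin n) (Fin n) ℂ} (hA : A.IsHermitian) :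
    NormedSpace.exp A = (hA.eigenvectorUnitary : Matrix (Fin n) (Fin n) ℂ) *
      diagonal (fun i => Complex.exp (hA.eigenvalues i)) *
      star (hA.eigenvectorUnitary : Matrix (Fin n) (Fin n) ℂ) := by
  set V : Matrix (Fin n) (Fin n) ℂ := (hA.eigenvectorUnitary : Matrix (Fin n) (Fin n) ℂ)
  have h1 : V * star V = 1 := (Unitary.mem_iff.mp hA.eigenvectorUnitary.2).2
  have h2 : star V * V = 1 := (Unitary.mem_iff.mp hA.eigenvectorUnitary.2).1
  set u : (Matrix (Fin n) (Fin n) ℂ)ˣ := ⟨V, star V, h1, h2⟩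
  have hconj := Matrix.exp_units_conj u (diagonal (RCLike.ofReal ∘ hA.eigenvalues))
  have hA' : A = (u : Matrix (Fin n) (Fin n) ℂ) * diagonal (RCLike.ofReal ∘ hA.eigenvalues) * (↑u⁻¹ : Matrix (Fin n) (Fin n) ℂ) := hA.spectral_theorem
  rw [congrArg (NormedSpace.exp) hA', hconj, Matrix.exp_diagonal]
  have hd : NormedSpace.exp (RCLike.ofReal ∘ hA.eigenvalues : Fin n → ℂ)
      = fun i => Complex.exp (hA.eigenvalues i) := by
    funext i
    rw [Pi.coe_exp, Function.comp_apply, ← Complex.exp_eq_exp_ℂ]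
    rfl
  rw [hd]
  rfl

lemma star_mul_ofReal_mul_re (w : ℂ) (r : ℝ) :
    (star w * (r : ℂ) * w).re = r * Complex.normSq w := by
  rw [Complex.star_def, mul_comm ((starRingEnd ℂ) w) _, mul_assoc,
    mul_comm ((starRingEnd ℂ) w) w, Complex.mul_conj, ← Complex.ofReal_mul, Complex.ofReal_re]

lemma re_trace_exp {A : Matrix (Fin n) (Fin n) ℂ} (hA : A.IsHermitian) :
    (Matrix.trace (NormedSpace.exp A)).re = ∑ i, Real.exp (hA.eigenvalues i) := by
  have h2 : star (hA.eigenvectorUnitary : Matrix (Fin n) (Fin n) ℂ)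
      * (hA.eigenvectorUnitary : Matrix (Fin n) (Fin n) ℂ) = 1 :=
    (Unitary.mem_iff.mp hA.eigenvectorUnitary.2).1
  rw [exp_hermitian hA, Matrix.trace_mul_cycle, h2, one_mul,
    Matrix.trace_diagonal, Complex.re_sum]
  simp [Complex.exp_ofReal_re]

lemma trace_exp_pos (hn : 1 ≤ n) {A : Matrix (Fin n) (Fin n) ℂ} (hA : A.IsHermitian) :
    0 < (Matrix.trace (NormedSpace.exp A)).re := by
  rw [re_trace_exp hA]
  have : Nonempty (Fin n) := ⟨⟨0, hn⟩⟩
  exact Finset.sum_pos (fun i _ => Real.exp_pos _) Finset.univ_nonempty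

lemma peierls {A V : Matrix (Fin n) (Fin n) ℂ} (hA : A.IsHermitian)
    (hV : V ∈ Matrix.unitaryGroup (Fin n) ℂ) :
    ∑ i, Real.exp (((star V * A * V) i i).re)
      ≤ (Matrix.trace (NormedSpace.exp A)).re := by
  rw [re_trace_exp hA]
  set U : Matrix (Fin n) (Fin n) ℂ := (hA.eigenvectorUnitary : Matrix (Fin n) (Fin n) ℂ) with hU
  set W : Matrix (Fin n) (Fin n) ℂ := star U * V with hW
  have hWu : W ∈ Matrix.unitaryGroup (Fin n) ℂ :=
    mul_mem (Unitary.star_mem hA.eigenvectorUnitary.2) hV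
  have hWW : star W * W = 1 := (Unitary.mem_iff.mp hWu).1
  have hWW' : W * star W = 1 := (Unitary.mem_iff.mp hWu).2
  set p : Fin n → Fin n → ℝ := fun j i => Complex.normSq (W j i) with hp
  have hpnn : ∀ j i, 0 ≤ p j i := fun j i => Complex.normSq_nonneg _
  have hcol : ∀ i, ∑ j, p j i = 1 := by
    intro i
    have h := congrFun (congrFun hWW i) i
    rw [Matrix.mul_apply] at h
    have h2 := congrArg Complex.re h
    rw [Complex.re_sum] at h2
    simp only [Matrix.one_apply_eq, Complex.one_re] at h2
    rw [← h2]
    congr 1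
    funext j
    rw [Matrix.star_apply, mul_comm, Complex.star_def, Complex.mul_conj]
    simp [hp]
  have hrow : ∀ j, ∑ i, p j i = 1 := by
    intro j
    have h := congrFun (congrFun hWW' j) j
    rw [Matrix.mul_apply] at h
    have h2 := congrArg Complex.re h
    rw [Complex.re_sum] at h2
    simp only [Matrix.one_apply_eq, Complex.one_re] at h2
    rw [← h2]
    congr 1
    funext i
    rw [Matrix.star_apply, Complex.star_def, Complex.mul_conj]
    simp [hp]
  have hAd : star V * A * V
      = star W * diagonal (RCLike.ofReal ∘ hA.eigenvalues) * W := by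
    conv_lhs => rw [hA.spectral_theorem]
    simp only [hW, hU, Unitary.conjStarAlgAut_apply, Unitary.coe_star, StarMul.star_mul, star_star, Matrix.mul_assoc]
  have hentry : ∀ i, ((star V * A * V) i i).re = ∑ j, p j i * hA.eigenvalues j := by
    intro i
    rw [hAd, Matrix.mul_apply, Complex.re_sum]
    congr 1
    funext j
    rw [Matrix.mul_diagonal, Matrix.star_apply]
    simp only [Function.comp_apply]
    have := star_mul_ofReal_mul_re (W j i) (hA.eigenvalues j)
    rw [mul_comm (p j i) _]
    exact this
  calc ∑ i, Real.exp (((star V * A * V) i i).re)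
      ≤ ∑ i, ∑ j, p j i * Real.exp (hA.eigenvalues j) := by
        apply Finset.sum_le_sum
        intro i _
        rw [hentry i]
        have := convexOn_exp.map_sum_le (t := Finset.univ) (w := fun j => p j i)
          (p := fun j => hA.eigenvalues j) (fun j _ => hpnn j i) (hcol i)
          (fun j _ => Set.mem_univ _)
        simpa [smul_eq_mul] using this
    _ = ∑ j, Real.exp (hA.eigenvalues j) := by
        rw [Finset.sum_comm]
        congr 1
        funext j
        rw [← Finset.sum_mul, hrow j, one_mul]

lemma isHermitian_combo {f g : Matrix (Fin n) (Fin n) ℂ} (hf : f.IsHermitian)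
    (hg : g.IsHermitian) (s r : ℝ) : (s • f + r • g).IsHermitian := by
  unfold Matrix.IsHermitian
  rw [Matrix.conjTranspose_add, Matrix.conjTranspose_smul, Matrix.conjTranspose_smul,
    hf, hg, star_trivial, star_trivial]

set_option maxHeartbeats 1000000 in
lemma key_ineq {A B : Matrix (Fin n) (Fin n) ℂ} (hA : A.IsHermitian) (hB : B.IsHermitian)
    {t : ℝ} (ht0 : 0 < t) (ht1 : t < 1) :
    (Matrix.trace (NormedSpace.exp (t • A + (1 - t) • B))).re
      ≤ (Matrix.trace (NormedSpace.exp A)).re ^ t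
        * (Matrix.trace (NormedSpace.exp B)).re ^ (1 - t) := by
  have hC : (t • A + (1 - t) • B).IsHermitian := isHermitian_combo hA hB t (1 - t)
  set C := t • A + (1 - t) • B with hCdef
  set V : Matrix (Fin n) (Fin n) ℂ := (hC.eigenvectorUnitary : Matrix (Fin n) (Fin n) ℂ) with hV
  have hVu : V ∈ Matrix.unitaryGroup (Fin n) ℂ := hC.eigenvectorUnitary.2
  set a : Fin n → ℝ := fun i => ((star V * A * V) i i).re with ha
  set b : Fin n → ℝ := fun i => ((star V * B * V) i i).re with hb
  have heig : ∀ i, hC.eigenvalues i = t * a i + (1 - t) * b i := by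
    intro i
    have hdiag : star V * C * V = diagonal (RCLike.ofReal ∘ hC.eigenvalues) := by
      have := hC.conjStarAlgAut_star_eigenvectorUnitary
      rw [Unitary.conjStarAlgAut_star_apply] at this
      exact this
    have h := congrFun (congrFun hdiag i) i
    have hsplit : star V * C * V = t • (star V * A * V) + (1 - t) • (star V * B * V) := by
      rw [hCdef]
      rw [Matrix.mul_add, Matrix.add_mul]
      congr 1 <;> rw [Matrix.mul_smul, Matrix.smul_mul]
    rw [hsplit] at h
    have h2 := congrArg Complex.re h
    simp only [Matrix.add_apply, Matrix.smul_apply, Complex.add_re, Complex.real_smul,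
      Complex.re_ofReal_mul, Matrix.diagonal_apply_eq, Function.comp_apply] at h2
    have h3 : (RCLike.ofReal (hC.eigenvalues i) : ℂ).re = hC.eigenvalues i :=
      Complex.ofReal_re _
    rw [h3] at h2
    rw [ha, hb]
    exact h2.symm
  have hZC : (Matrix.trace (NormedSpace.exp C)).re
      = ∑ i, Real.exp (a i) ^ t * Real.exp (b i) ^ (1 - t) := by
    rw [re_trace_exp hC]
    apply Finset.sum_congr rfl
    intro i _
    rw [heig i, Real.exp_add]
    congr 1
    · rw [Real.rpow_def_of_pos (Real.exp_pos _), Real.log_exp, mul_comm]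
    · rw [Real.rpow_def_of_pos (Real.exp_pos _), Real.log_exp, mul_comm]
  have hpq : Real.HolderConjugate (1 / t) (1 / (1 - t)) :=
    Real.holderConjugate_one_div ht0 (by linarith) (by ring)
  have holder := Real.inner_le_Lp_mul_Lq_of_nonneg (s := Finset.univ)
    (f := fun i => Real.exp (a i) ^ t) (g := fun i => Real.exp (b i) ^ (1 - t)) hpq
    (fun i _ => Real.rpow_nonneg (Real.exp_pos _).le _)
    (fun i _ => Real.rpow_nonneg (Real.exp_pos _).le _)
  have hfp : ∀ x : ℝ, (Real.exp x ^ t) ^ (1 / t) = Real.exp x := by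
    intro x
    rw [← Real.rpow_mul (Real.exp_pos _).le, mul_one_div, div_self ht0.ne', Real.rpow_one]
  have hgp : ∀ x : ℝ, (Real.exp x ^ (1 - t)) ^ (1 / (1 - t)) = Real.exp x := by
    intro x
    have h1t : (1 - t) ≠ 0 := by linarith
    rw [← Real.rpow_mul (Real.exp_pos _).le, mul_one_div, div_self h1t, Real.rpow_one]
  simp only [hfp, hgp, one_div_one_div] at holder
  rw [hZC]
  refine holder.trans ?_
  have hPA := peierls hA hVu
  have hPB := peierls hB hVu
  have h1t : (0:ℝ) ≤ 1 - t := by linarith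
  have hsa : (0:ℝ) ≤ ∑ i, Real.exp (a i) := Finset.sum_nonneg fun i _ => (Real.exp_pos _).le
  have hsb : (0:ℝ) ≤ ∑ i, Real.exp (b i) := Finset.sum_nonneg fun i _ => (Real.exp_pos _).le
  exact mul_le_mul (Real.rpow_le_rpow hsa hPA ht0.le) (Real.rpow_le_rpow hsb hPB h1t)
    (Real.rpow_nonneg hsb _) (Real.rpow_nonneg (hsa.trans hPA) _)


end Aux

/-- The generating functional `W(f) = -log Re tr(exp(-f))` is concave on the
real vector space of Hermitian matrices: for Hermitian `f, g` and `t ∈ [0,1]`,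
`W(t·f + (1-t)·g) ≥ t·W(f) + (1-t)·W(g)`. -/
theorem genFunctional_concave
    {n : ℕ} (hn : 1 ≤ n)
    (f g : Matrix (Fin n) (Fin n) ℂ)
    (hf : f.IsHermitian) (hg : g.IsHermitian)
    (t : ℝ) (ht0 : 0 ≤ t) (ht1 : t ≤ 1) :
    t * genFunctional f + (1 - t) * genFunctional g
      ≤ genFunctional (t • f + (1 - t) • g) := by
  rcases eq_or_lt_of_le ht0 with rfl | ht0'
  · simp
  rcases eq_or_lt_of_le ht1 with rfl | ht1'
  · norm_num
  have hA : (-f).IsHermitian := hf.neg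
  have hB : (-g).IsHermitian := hg.neg
  have hC : (t • (-f) + (1 - t) • (-g)).IsHermitian := isHermitian_combo hA hB t (1 - t)
  have hneg : -(t • f + (1 - t) • g) = t • (-f) + (1 - t) • (-g) := by
    rw [neg_add, smul_neg, smul_neg]
  have key := key_ineq hA hB ht0' ht1'
  have hZA : 0 < (Matrix.trace (NormedSpace.exp (-f))).re := trace_exp_pos hn hA
  have hZB : 0 < (Matrix.trace (NormedSpace.exp (-g))).re := trace_exp_pos hn hB
  have hZC : 0 < (Matrix.trace (NormedSpace.exp (t • (-f) + (1 - t) • (-g)))).re :=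
    trace_exp_pos hn hC
  unfold genFunctional
  rw [hneg]
  have hlog := Real.log_le_log hZC key
  rw [Real.log_mul (ne_of_gt (Real.rpow_pos_of_pos hZA _))
      (ne_of_gt (Real.rpow_pos_of_pos hZB _)),
    Real.log_rpow hZA, Real.log_rpow hZB] at hlog
  linarith
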